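/- (Lemma 6.) Let C ∈ ℝ^{m×m} be symmetric positive semidefinite with positive semidefinite square root S = √C, and define the block operator T_C : ℝ^{m×d} × ℝ^{m×d} → ℝ^{m×d} × ℝ^{m×d} by T_C(Z, W) = (Z − S W, S Z + (I − C) W). Then for all X = (X_u, X_ℓ) and Y = (Y_u, Y_ℓ) in ℝ^{m×d} × ℝ^{m×d}: ⟨(I−C)(Z_u), Z_u⟩_F + ‖Z_ℓ‖²_F = ‖U_u‖²_F + ⟨(I−C)(U_ℓ), U_ℓ⟩_F, where (Z_u, Z_ℓ) = T_C X − T_C Y and (U_u, U_ℓ) = X − Y. Equivalently, ‖T_C X − T_C Y‖²_{Λ_C} = ‖X − Y‖²_{V_C} with Λ_C = diag(I−C, I) and V_C = diag(I, I−C). -/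

import Mathlib

open Matrix

/-- Squared Euclidean norm of a vector in ℝ^d. -/
noncomputable def vecNormSq {d : ℕ} (v : Fin d → ℝ) : ℝ := ∑ j, v j ^ 2

/-- The continuous linear map `u ↦ ⟨v, u⟩` on ℝ^d (used to state that `v` is a gradient). -/
noncomputable def dotCLM {d : ℕ} (v : Fin d → ℝ) : (Fin d → ℝ) →L[ℝ] ℝ :=
  LinearMap.toContinuousLinearMap
    (∑ j, v j • (LinearMap.proj j : (Fin d → ℝ) →ₗ[ℝ] ℝ))

/-- Squared Frobenius norm. -/
noncomputable def frobSq {m d : ℕ} (X : Matrix (Fin m) (Fin d) ℝ) : ℝ :=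
  ∑ i, ∑ j, X i j ^ 2

/-- Frobenius inner product `⟨X, Y⟩_F = trace(Xᵀ Y)`. -/
noncomputable def frobInner {m d : ℕ} (X Y : Matrix (Fin m) (Fin d) ℝ) : ℝ :=
  ∑ i, ∑ j, X i j * Y i j

/-- All ones vector `1_m`. -/
def onesV (m : ℕ) : Fin m → ℝ := fun _ => 1

/-- The consensus matrix `1_m xᵀ` (all rows equal to `x`). -/
def consMat (m : ℕ) {d : ℕ} (x : Fin d → ℝ) : Matrix (Fin m) (Fin d) ℝ :=
  Matrix.of fun _ j => x j

/-- The matrix `∇f(X)` whose `i`-th row is `∇f_i(x_i)`. -/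
noncomputable def gradMat {m d : ℕ} (gradf : Fin m → (Fin d → ℝ) → (Fin d → ℝ))
    (X : Matrix (Fin m) (Fin d) ℝ) : Matrix (Fin m) (Fin d) ℝ :=
  Matrix.of fun i j => gradf i (X i) j

/-- `v` is a subgradient of the extended-valued convex function `G` at `x`. -/
def IsSubgradAt {d : ℕ} (G : (Fin d → ℝ) → EReal) (v x : Fin d → ℝ) : Prop :=
  ∀ u : Fin d → ℝ, G x + (((∑ j, v j * (u j - x j)) : ℝ) : EReal) ≤ G u

/-- Convexity for an extended-real-valued function. -/
def ERealConvexOn {d : ℕ} (G : (Fin d → ℝ) → EReal) : Prop :=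
  ∀ x y : Fin d → ℝ, ∀ a b : ℝ, 0 ≤ a → 0 ≤ b → a + b = 1 →
    G (a • x + b • y) ≤ (a : EReal) * G x + (b : EReal) * G y

/-- `G` is proper: never `⊥` and finite somewhere. -/
def GProper {d : ℕ} (G : (Fin d → ℝ) → EReal) : Prop :=
  (∀ x, G x ≠ ⊥) ∧ (∃ x, G x ≠ ⊤)

/-- `g(X) = Σ_i G(x_i)`. -/
noncomputable def gSum {m d : ℕ} (G : (Fin d → ℝ) → EReal)
    (X : Matrix (Fin m) (Fin d) ℝ) : EReal :=
  ∑ i, G (X i)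

/-- Objective of the proximal subproblem `Y ↦ g(Y) + (1/(2γ))‖Y − Z‖²_F`. -/
noncomputable def proxObj {m d : ℕ} (G : (Fin d → ℝ) → EReal) (γ : ℝ)
    (Z Y : Matrix (Fin m) (Fin d) ℝ) : EReal :=
  gSum G Y + (((1 / (2 * γ) * frobSq (Y - Z)) : ℝ) : EReal)

/-- `P` is the unique minimizer of the proximal subproblem, i.e. `P = prox_{γ g}(Z)`. -/
def IsProx {m d : ℕ} (G : (Fin d → ℝ) → EReal) (γ : ℝ)
    (Z P : Matrix (Fin m) (Fin d) ℝ) : Prop :=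
  (∀ Y, proxObj G γ Z P ≤ proxObj G γ Z Y) ∧
  (∀ Y, (∀ Y', proxObj G γ Z Y ≤ proxObj G γ Z Y') → Y = P)

/-- Largest eigenvalue of a symmetric matrix, via the Rayleigh quotient. -/
noncomputable def lamMax {m : ℕ} (P : Matrix (Fin m) (Fin m) ℝ) : ℝ :=
  sSup {r : ℝ | ∃ z : Fin m → ℝ, vecNormSq z = 1 ∧ r = z ⬝ᵥ (P *ᵥ z)}

/-- Smallest eigenvalue of a symmetric matrix, via the Rayleigh quotient. -/
noncomputable def lamMin {m : ℕ} (P : Matrix (Fin m) (Fin m) ℝ) : ℝ :=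
  sInf {r : ℝ | ∃ z : Fin m → ℝ, vecNormSq z = 1 ∧ r = z ⬝ᵥ (P *ᵥ z)}

/-- Second-smallest eigenvalue `λ₂(C) = min{⟨z, Cz⟩ : ‖z‖ = 1, 1ᵀz = 0}`. -/
noncomputable def lam2 {m : ℕ} (C : Matrix (Fin m) (Fin m) ℝ) : ℝ :=
  sInf {r : ℝ | ∃ z : Fin m → ℝ, vecNormSq z = 1 ∧ (∑ i, z i) = 0 ∧ r = z ⬝ᵥ (C *ᵥ z)}


open scoped ComplexOrder in
noncomputable def Matrix.PosSemidef.sqrt {n 𝕜 : Type*} [Fintype n] [RCLike 𝕜] [DecidableEq n]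
    {A : Matrix n n 𝕜} (hA : A.PosSemidef) : Matrix n n 𝕜 :=
  hA.1.eigenvectorUnitary.1 * diagonal ((RCLike.ofReal : ℝ → 𝕜) ∘ (fun i => Real.sqrt (hA.1.eigenvalues i))) *
    (star hA.1.eigenvectorUnitary : Matrix n n 𝕜)

lemma psd_sqrt_mul_self {n : Type*} [Fintype n] [DecidableEq n] {A : Matrix n n ℝ}
    (hA : A.PosSemidef) : hA.sqrt * hA.sqrt = A := by
  have hU : star (hA.1.eigenvectorUnitary : Matrix n n ℝ) * hA.1.eigenvectorUnitary = 1 :=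
    Unitary.star_mul_self_of_mem hA.1.eigenvectorUnitary.2
  have hD : diagonal ((RCLike.ofReal : ℝ → ℝ) ∘ (fun i => Real.sqrt (hA.1.eigenvalues i))) *
      diagonal ((RCLike.ofReal : ℝ → ℝ) ∘ (fun i => Real.sqrt (hA.1.eigenvalues i)))
      = diagonal ((RCLike.ofReal : ℝ → ℝ) ∘ hA.1.eigenvalues) := by
    rw [diagonal_mul_diagonal]
    congr 1; funext i
    simp [Real.mul_self_sqrt (hA.eigenvalues_nonneg i)]
  conv_rhs => rw [hA.1.spectral_theorem, Unitary.conjStarAlgAut_apply]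
  simp only [Matrix.PosSemidef.sqrt, Matrix.mul_assoc]
  rw [← Matrix.mul_assoc (star _) (hA.1.eigenvectorUnitary : Matrix n n ℝ), hU, Matrix.one_mul,
    ← Matrix.mul_assoc (diagonal _) (diagonal _), hD]

lemma psd_sqrt_posSemidef {n : Type*} [Fintype n] [DecidableEq n] {A : Matrix n n ℝ}
    (hA : A.PosSemidef) : hA.sqrt.PosSemidef := by
  have := (posSemidef_diagonal_iff.2 (fun i => by
    simpa using Real.sqrt_nonneg (hA.1.eigenvalues i)) :
    (diagonal ((RCLike.ofReal : ℝ → ℝ) ∘ (fun i => Real.sqrt (hA.1.eigenvalues i)))).PosSemidef)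
  have h := this.mul_mul_conjTranspose_same (hA.1.eigenvectorUnitary : Matrix n n ℝ)
  simpa [Matrix.PosSemidef.sqrt, Matrix.star_eq_conjTranspose] using h

lemma fi_trace {m d : ℕ} (X Y : Matrix (Fin m) (Fin d) ℝ) :
    frobInner X Y = Matrix.trace (Xᵀ * Y) := by
  simp only [frobInner, Matrix.trace, Matrix.diag, Matrix.mul_apply, Matrix.transpose_apply]
  rw [Finset.sum_comm]

lemma fs_fi {m d : ℕ} (X : Matrix (Fin m) (Fin d) ℝ) : frobSq X = frobInner X X := by
  simp [frobSq, frobInner, sq]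

/-- Lemma 6: isometry-type identity for the communication operator `T_C`. -/
theorem stmt_8 {m d : ℕ} (C : Matrix (Fin m) (Fin m) ℝ) (hC : C.PosSemidef)
    (Xu Xl Yu Yl : Matrix (Fin m) (Fin d) ℝ) :
    frobInner ((1 - C) * ((Xu - hC.sqrt * Xl) - (Yu - hC.sqrt * Yl)))
        ((Xu - hC.sqrt * Xl) - (Yu - hC.sqrt * Yl))
      + frobSq ((hC.sqrt * Xu + (1 - C) * Xl) - (hC.sqrt * Yu + (1 - C) * Yl))
    = frobSq (Xu - Yu) + frobInner ((1 - C) * (Xl - Yl)) (Xl - Yl) := by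
  
  set S := hC.sqrt with hSdef
  set P : Matrix (Fin m) (Fin m) ℝ := 1 - C with hPdef
  set A := Xu - Yu with hA
  set B := Xl - Yl with hB
  have hSS : S * S = C := psd_sqrt_mul_self hC
  have hSt : Sᵀ = S := by
    have := (psd_sqrt_posSemidef hC).1
    simpa [Matrix.IsHermitian, Matrix.conjTranspose_eq_transpose_of_trivial] using this
  have hCt : Cᵀ = C := by
    have := hC.1
    simpa [Matrix.IsHermitian, Matrix.conjTranspose_eq_transpose_of_trivial] using this
  have hPt : Pᵀ = P := by simp [hPdef, Matrix.transpose_sub, hCt]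
  have h1 : ∀ X : Matrix (Fin m) (Fin d) ℝ, S * (P * X) = P * (S * X) := by
    intro X
    rw [← Matrix.mul_assoc, ← Matrix.mul_assoc]
    congr 1
    simp [hPdef, Matrix.mul_sub, Matrix.sub_mul, ← hSS, Matrix.mul_assoc]
  have h2 : ∀ X : Matrix (Fin m) (Fin d) ℝ, P * X + S * (S * X) = X := by
    intro X
    rw [← Matrix.mul_assoc, hSS, ← Matrix.add_mul]
    simp [hPdef]
  have hZ1 : (Xu - S * Xl) - (Yu - S * Yl) = A - S * B := by
    rw [hA, hB, Matrix.mul_sub]; abel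
  have hZ2 : (S * Xu + P * Xl) - (S * Yu + P * Yl) = S * A + P * B := by
    rw [hA, hB, Matrix.mul_sub, Matrix.mul_sub]; abel
  rw [hZ1, hZ2, fs_fi, fs_fi, fi_trace, fi_trace, fi_trace, fi_trace,
    ← Matrix.trace_add, ← Matrix.trace_add]
  congr 1
  have expand : (P * (A - S * B))ᵀ * (A - S * B) + (S * A + P * B)ᵀ * (S * A + P * B)
      = (Aᵀ * (P * A) + Aᵀ * (S * (S * A)))
        + (Bᵀ * (P * (S * (S * B))) + Bᵀ * (P * (P * B))) := by
    simp only [Matrix.transpose_mul, Matrix.transpose_add, Matrix.transpose_sub, hSt, hPt,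
      Matrix.mul_add, Matrix.add_mul, Matrix.mul_sub, Matrix.sub_mul, Matrix.mul_assoc, h1]
    abel
  rw [expand, ← Matrix.mul_add Aᵀ, h2, ← Matrix.mul_add Bᵀ, ← Matrix.mul_add P,
    add_comm (S * (S * B)), h2, Matrix.transpose_mul, hPt, Matrix.mul_assoc]
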